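/- Let p < q be positive integers, Σ ∈ ℝ^{q×q} symmetric positive definite, L̇ ∈ ℝ^{q×p} of full rank p, P = L̇(L̇ᵀΣ⁻¹L̇)⁻¹L̇ᵀΣ⁻¹, and Q = I_q − P. Let Q Σ Qᵀ = V diag(ν₁,…,ν_q) Vᵀ be a spectral decomposition with V orthogonal and ν₁ ≥ … ≥ ν_q ≥ 0, set s = q − p (so that ν_s > 0 and ν_j = 0 for j > s), and let A = V_s diag(ν₁,…,ν_s)⁻¹ V_sᵀ, where V_s consists of the first s columns of V. Then Qᵀ (Σ⁻¹ − A) Q = 0. -/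

import Mathlib

open Matrix

noncomputable section

/-- with `Σ` symmetric positive definite, `L̇` of full rank `p < q`,
`P = L̇(L̇ᵀΣ⁻¹L̇)⁻¹L̇ᵀΣ⁻¹`, `Q = I − P`, a spectral decomposition
`QΣQᵀ = V diag(ν₁ ≥ … ≥ ν_q ≥ 0) Vᵀ`, `s = q − p` (so that `ν_j > 0` for `j ≤ s`
and `ν_j = 0` for `j > s`), and `A = V_s diag(ν₁,…,ν_s)⁻¹ V_sᵀ` with `V_s` the first `s`
columns of `V`, one has `Qᵀ (Σ⁻¹ − A) Q = 0`. -/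
theorem stmt13 {p q : ℕ} (hp : 0 < p) (hpq : p < q)
    (Sig : Matrix (Fin q) (Fin q) ℝ) (hSig : Sig.PosDef)
    (Ld : Matrix (Fin q) (Fin p) ℝ) (hrank : Ld.rank = p)
    (P Q : Matrix (Fin q) (Fin q) ℝ)
    (hP : P = Ld * (Ldᵀ * Sig⁻¹ * Ld)⁻¹ * Ldᵀ * Sig⁻¹)
    (hQ : Q = 1 - P)
    (V : Matrix (Fin q) (Fin q) ℝ) (nu : Fin q → ℝ)
    (hVorth : Vᵀ * V = 1)
    (hdecomp : Q * Sig * Qᵀ = V * Matrix.diagonal nu * Vᵀ)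
    (hsorted : ∀ i j : Fin q, i ≤ j → nu j ≤ nu i)
    (hnonneg : ∀ j, 0 ≤ nu j)
    (s : ℕ) (hs : s = q - p)
    (hpos : ∀ j : Fin q, (j : ℕ) < s → 0 < nu j)
    (hzero : ∀ j : Fin q, s ≤ (j : ℕ) → nu j = 0)
    (A : Matrix (Fin q) (Fin q) ℝ)
    (hA : A = (V.submatrix id (Fin.castLE (show s ≤ q by omega))) *
      Matrix.diagonal (fun j : Fin s => (nu (Fin.castLE (show s ≤ q by omega) j))⁻¹) *
      (V.submatrix id (Fin.castLE (show s ≤ q by omega)))ᵀ) :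
    Qᵀ * (Sig⁻¹ - A) * Q = 0 := by
  have hsq : s ≤ q := by omega
  -- Sig inverse facts
  have hSigInv : (Sig⁻¹).PosDef := hSig.inv
  have hSigInvT : Sig⁻¹ᵀ = Sig⁻¹ := by
    have := hSigInv.isHermitian
    simpa [Matrix.IsHermitian, Matrix.conjTranspose_eq_transpose_of_trivial] using this
  have hSigdet : IsUnit Sig.det := isUnit_iff_ne_zero.mpr hSig.det_pos.ne'
  have hSS : Sig⁻¹ * Sig = 1 := Matrix.nonsing_inv_mul Sig hSigdet
  have hSS' : Sig * Sig⁻¹ = 1 := Matrix.mul_nonsing_inv Sig hSigdet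
  -- injectivity of Ld
  have hker : LinearMap.ker Ld.mulVecLin = ⊥ := by
    have h1 := Ld.mulVecLin.finrank_range_add_finrank_ker
    have h2 : Ld.rank = Module.finrank ℝ (LinearMap.range Ld.mulVecLin) := rfl
    have h3 : Module.finrank ℝ (Fin p → ℝ) = p := by simp
    have h4 : Module.finrank ℝ (LinearMap.ker Ld.mulVecLin) = 0 := by omega
    exact Submodule.finrank_eq_zero.mp h4
  have hLdinj : ∀ x : Fin p → ℝ, x ≠ 0 → Ld *ᵥ x ≠ 0 := by
    intro x hx hc
    apply hx
    have : x ∈ LinearMap.ker Ld.mulVecLin := by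
      simpa [Matrix.mulVecLin_apply] using hc
    simpa [hker] using this
  -- B := Ldᵀ Σ⁻¹ Ld is positive definite
  set B : Matrix (Fin p) (Fin p) ℝ := Ldᵀ * Sig⁻¹ * Ld with hB
  have hBposdef : B.PosDef := by
    refine Matrix.PosDef.of_dotProduct_mulVec_pos ?_ ?_
    · show Bᴴ = B
      have hBH : Bᴴ = Bᵀ := by
        ext i j; simp [Matrix.conjTranspose_apply, Matrix.transpose_apply]
      rw [hBH, hB, Matrix.transpose_mul, Matrix.transpose_mul, Matrix.transpose_transpose,
        hSigInvT, Matrix.mul_assoc]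
    · intro x hx
      have hsx : star x = x := by simp
      have hmv : B *ᵥ x = Ldᵀ *ᵥ (Sig⁻¹ *ᵥ (Ld *ᵥ x)) := by
        rw [hB, ← Matrix.mulVec_mulVec, ← Matrix.mulVec_mulVec]
      rw [hsx, hmv, Matrix.dotProduct_mulVec, Matrix.vecMul_transpose]
      have := hSigInv.dotProduct_mulVec_pos (hLdinj x hx)
      simpa using this
  have hBdet : IsUnit B.det := isUnit_iff_ne_zero.mpr hBposdef.det_pos.ne'
  have hBinvB : B⁻¹ * B = 1 := Matrix.nonsing_inv_mul B hBdet
  have hBT : Bᵀ = B := by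
    rw [hB, Matrix.transpose_mul, Matrix.transpose_mul, Matrix.transpose_transpose,
      hSigInvT, Matrix.mul_assoc]
  have hB' : Ldᵀ * (Sig⁻¹ * Ld) = B := by rw [hB, Matrix.mul_assoc]
  -- P is idempotent
  have hPLd : P * Ld = Ld := by
    rw [hP]
    simp only [Matrix.mul_assoc]
    rw [hB', hBinvB, Matrix.mul_one]
  have hPP : P * P = P := by
    nth_rewrite 2 [hP]
    calc P * (Ld * (Ldᵀ * Sig⁻¹ * Ld)⁻¹ * Ldᵀ * Sig⁻¹)
        = (P * Ld) * (Ldᵀ * Sig⁻¹ * Ld)⁻¹ * Ldᵀ * Sig⁻¹ := by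
          simp only [Matrix.mul_assoc]
      _ = P := by rw [hPLd, ← hP]
  -- symmetry of Σ⁻¹ P
  have hsymm : Sig⁻¹ * P = Pᵀ * Sig⁻¹ := by
    simp only [hP, Matrix.transpose_mul, Matrix.transpose_transpose,
      Matrix.transpose_nonsing_inv, hBT, hSigInvT, Matrix.mul_assoc]
  have hQQ : Q * Q = Q := by
    have expand : (1 - P) * (1 - P) = 1 - P - P + P * P := by noncomm_ring
    rw [hQ, expand, hPP]
    abel
  have hQsym : Sig⁻¹ * Q = Qᵀ * Sig⁻¹ := by
    rw [hQ]
    simp only [Matrix.mul_sub, Matrix.sub_mul, Matrix.mul_one, Matrix.one_mul,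
      Matrix.transpose_sub, Matrix.transpose_one, hsymm]
  set M : Matrix (Fin q) (Fin q) ℝ := Q * Sig * Qᵀ with hM
  have hM1 : Sig⁻¹ * M = Qᵀ := by
    calc Sig⁻¹ * (Q * Sig * Qᵀ) = (Sig⁻¹ * Q) * Sig * Qᵀ := by simp only [Matrix.mul_assoc]
      _ = Qᵀ * (Sig⁻¹ * Sig) * Qᵀ := by rw [hQsym]; simp only [Matrix.mul_assoc]
      _ = Qᵀ * Qᵀ := by rw [hSS, Matrix.mul_one]
      _ = (Q * Q)ᵀ := by rw [Matrix.transpose_mul]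
      _ = Qᵀ := by rw [hQQ]
  have hM2 : M * Sig⁻¹ = Q := by
    calc Q * Sig * Qᵀ * Sig⁻¹ = Q * Sig * (Qᵀ * Sig⁻¹) := by simp only [Matrix.mul_assoc]
      _ = Q * (Sig * Sig⁻¹) * Q := by rw [← hQsym]; simp only [Matrix.mul_assoc]
      _ = Q * Q := by rw [hSS', Matrix.mul_one]
      _ = Q := hQQ
  -- A as a full-size pseudo-inverse
  have hA' : A = V * Matrix.diagonal (fun j => (nu j)⁻¹) * Vᵀ := by
    have hcinj : Function.Injective (Fin.castLE hsq : Fin s → Fin q) :=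
      Fin.castLE_injective hsq
    rw [hA]
    ext i k
    simp only [Matrix.mul_apply, Matrix.diagonal_apply, Matrix.transpose_apply,
      Matrix.submatrix_apply, id_eq, ite_mul, mul_ite, mul_zero, zero_mul,
      Finset.sum_ite_eq, Finset.sum_ite_eq', Finset.mem_univ, if_true]
    rw [← Finset.sum_image (f := fun j => V i j * (nu j)⁻¹ * V k j)
      (fun a _ b _ h => hcinj h)]
    apply Finset.sum_subset (Finset.subset_univ _)
    intro x _ hx
    have hxs : s ≤ (x : ℕ) := by
      by_contra h
      push_neg at h
      exact hx (Finset.mem_image.mpr ⟨⟨(x : ℕ), h⟩, Finset.mem_univ _, by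
        ext; simp [Fin.castLE]⟩)
    rw [hzero x hxs]
    simp
  have hVV : ∀ X : Matrix (Fin q) (Fin q) ℝ, Vᵀ * (V * X) = X := fun X => by
    rw [← Matrix.mul_assoc, hVorth, Matrix.one_mul]
  have hDDD : Matrix.diagonal nu * Matrix.diagonal (fun j => (nu j)⁻¹) * Matrix.diagonal nu
      = Matrix.diagonal nu := by
    rw [Matrix.diagonal_mul_diagonal, Matrix.diagonal_mul_diagonal]
    congr 1
    funext j
    rcases eq_or_ne (nu j) 0 with h | h
    · simp [h]
    · field_simp
  have hMAM : M * A * M = M := by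
    rw [hdecomp, hA']
    calc V * Matrix.diagonal nu * Vᵀ * (V * Matrix.diagonal (fun j => (nu j)⁻¹) * Vᵀ) *
          (V * Matrix.diagonal nu * Vᵀ)
        = V * (Matrix.diagonal nu * (Vᵀ * (V * (Matrix.diagonal (fun j => (nu j)⁻¹) *
            (Vᵀ * (V * (Matrix.diagonal nu * Vᵀ))))))) := by simp only [Matrix.mul_assoc]
      _ = V * (Matrix.diagonal nu * (Matrix.diagonal (fun j => (nu j)⁻¹) *
            (Matrix.diagonal nu * Vᵀ))) := by rw [hVV, hVV]
      _ = V * (Matrix.diagonal nu * Matrix.diagonal (fun j => (nu j)⁻¹) *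
            Matrix.diagonal nu) * Vᵀ := by simp only [Matrix.mul_assoc]
      _ = V * Matrix.diagonal nu * Vᵀ := by rw [hDDD]
  have key : Qᵀ * A * Q = Qᵀ * Sig⁻¹ * Q := by
    have h5 : Qᵀ * Sig⁻¹ * Q = Qᵀ * Sig⁻¹ := by
      calc Qᵀ * Sig⁻¹ * Q = Qᵀ * (Sig⁻¹ * Q) := by rw [Matrix.mul_assoc]
        _ = Qᵀ * (Qᵀ * Sig⁻¹) := by rw [hQsym]
        _ = (Q * Q)ᵀ * Sig⁻¹ := by rw [Matrix.transpose_mul, Matrix.mul_assoc]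
        _ = Qᵀ * Sig⁻¹ := by rw [hQQ]
    calc Qᵀ * A * Q = (Sig⁻¹ * M) * A * (M * Sig⁻¹) := by rw [hM1, hM2]
      _ = Sig⁻¹ * (M * A * M) * Sig⁻¹ := by simp only [Matrix.mul_assoc]
      _ = (Sig⁻¹ * M) * Sig⁻¹ := by rw [hMAM, Matrix.mul_assoc]
      _ = Qᵀ * Sig⁻¹ := by rw [hM1]
      _ = Qᵀ * Sig⁻¹ * Q := h5.symm
  rw [Matrix.mul_sub, Matrix.sub_mul, key, sub_self]
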